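/- For n ≥ 7 and any integer x with 4 ≤ x ≤ n-3 such that (n-4)·x is even, the sequence d = (n-1, n-1, x, x, …, x, 2, 2) of length n (with n-4 copies of x) is graphic. -/

import Mathlib

/-- A finite list of naturals is graphic if it is realized as the degree sequence of a
simple graph. -/
def IsGraphicList (l : List ℕ) : Prop :=
  ∃ (G : SimpleGraph (Fin l.length)) (_ : DecidableRel G.Adj), ∀ i, G.degree i = l.get i

lemma regS (m k : ℕ) [NeZero m] (hk : k + 1 ≤ m) (hpar : Even (m * k)) :
    ∃ S : Finset (ZMod m), S.card = k ∧ (∀ z ∈ S, -z ∈ S) ∧ (0 : ZMod m) ∉ S := by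
  set h := k / 2 with hh
  have hm : 0 < m := Nat.pos_of_ne_zero (NeZero.ne m)
  have h2h : 2 * h < m := by omega
  set A : Finset ℕ := (Finset.Icc 1 h ∪ Finset.Icc (m - h) (m - 1)) ∪
      (if k % 2 = 1 then {m / 2} else ∅) with hA
  have hmev : k % 2 = 1 → m % 2 = 0 := by
    intro hk1
    rcases Nat.even_mul.mp hpar with he | he
    · obtain ⟨c, hc⟩ := he; omega
    · obtain ⟨c, hc⟩ := he; omega
  have hmemA : ∀ v, v ∈ A ↔ (1 ≤ v ∧ v ≤ h) ∨ (m - h ≤ v ∧ v ≤ m - 1) ∨ (k % 2 = 1 ∧ v = m / 2) := by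
    intro v
    simp only [hA, Finset.mem_union, Finset.mem_Icc]
    split_ifs with hko
    · simp only [Finset.mem_singleton]; tauto
    · simp only [Finset.notMem_empty]; tauto
  have hrange : ∀ v ∈ A, 1 ≤ v ∧ v ≤ m - 1 := by
    intro v hv
    rw [hmemA] at hv
    rcases hv with ⟨h1, h2⟩ | ⟨h1, h2⟩ | ⟨h1, h2⟩
    · omega
    · omega
    · have := hmev h1; omega
  have hsymA : ∀ v ∈ A, m - v ∈ A := by
    intro v hv
    have hr := hrange v hv
    rw [hmemA] at hv ⊢
    rcases hv with ⟨h1, h2⟩ | ⟨h1, h2⟩ | ⟨h1, h2⟩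
    · right; left; omega
    · left; omega
    · have := hmev h1; right; right; exact ⟨h1, by omega⟩
  have hcardA : A.card = k := by
    have d1 : Disjoint (Finset.Icc 1 h) (Finset.Icc (m - h) (m - 1)) := by
      rw [Finset.disjoint_left]; intro a ha hb
      simp only [Finset.mem_Icc] at ha hb; omega
    have d2 : Disjoint (Finset.Icc 1 h ∪ Finset.Icc (m - h) (m - 1))
        (if k % 2 = 1 then ({m / 2} : Finset ℕ) else ∅) := by
      split_ifs with hko
      · have hme := hmev hko
        rw [Finset.disjoint_left]; intro a ha hb
        simp only [Finset.mem_union, Finset.mem_Icc, Finset.mem_singleton] at ha hb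
        omega
      · exact Finset.disjoint_empty_right _
    rw [hA, Finset.card_union_of_disjoint d2, Finset.card_union_of_disjoint d1]
    rw [Nat.card_Icc, Nat.card_Icc]
    split_ifs with hko
    · simp; omega
    · simp; omega
  refine ⟨A.image (Nat.cast : ℕ → ZMod m), ?_, ?_, ?_⟩
  · rw [Finset.card_image_of_injOn, hcardA]
    intro a ha b hb hab
    have hra := hrange a ha; have hrb := hrange b hb
    have : ((a : ZMod m)).val = ((b : ZMod m)).val := by rw [hab]
    rwa [ZMod.val_cast_of_lt (by omega), ZMod.val_cast_of_lt (by omega)] at this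
  · intro z hz
    simp only [Finset.mem_image] at hz ⊢
    obtain ⟨v, hv, rfl⟩ := hz
    refine ⟨m - v, hsymA v hv, ?_⟩
    have hr := hrange v hv
    push_cast [Nat.cast_sub (by omega : v ≤ m)]
    simp
  · intro h0
    simp only [Finset.mem_image] at h0
    obtain ⟨v, hv, hv0⟩ := h0
    have hr := hrange v hv
    have : ((v : ZMod m)).val = (0 : ZMod m).val := by rw [hv0]
    rw [ZMod.val_cast_of_lt (by omega), ZMod.val_zero] at this
    omega

/-- For `n ≥ 7` and `4 ≤ x ≤ n-3` with `(n-4)·x` even, the sequence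
`(n-1, n-1, x, …, x, 2, 2)` of length `n` (with `n-4` copies of `x`) is graphic. -/
theorem seq_k2_graphic {n x : ℕ} (hn : 7 ≤ n) (hx4 : 4 ≤ x) (hxn : x ≤ n - 3)
    (hpar : Even ((n - 4) * x)) :
    IsGraphicList ([n - 1, n - 1] ++ List.replicate (n - 4) x ++ [2, 2]) := by
  set m : ℕ := n - 4 with hm
  set k : ℕ := x - 2 with hk
  have hm3 : 3 ≤ m := by omega
  haveI : NeZero m := ⟨by omega⟩
  have hkm : k + 1 ≤ m := by omega
  have hmk : Even (m * k) := by
    obtain ⟨c, hc⟩ := hpar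
    have hxk : x = k + 2 := by omega
    have : m * x = m * k + 2 * m := by rw [hxk]; ring
    exact ⟨c - m, by omega⟩
  obtain ⟨S, hScard, hSneg, hS0⟩ := regS m k hkm hmk
  set e : ℕ → ZMod m := fun v => ((v - 2 : ℕ) : ZMod m) with he
  set G : SimpleGraph (Fin ([n - 1, n - 1] ++ List.replicate (n - 4) x ++ [2, 2]).length) :=
    { Adj := fun a b => a ≠ b ∧ ((a : ℕ) < 2 ∨ (b : ℕ) < 2 ∨
        ((a : ℕ) < m + 2 ∧ (b : ℕ) < m + 2 ∧ e (b : ℕ) - e (a : ℕ) ∈ S))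
      symm := by
        constructor
        rintro a b ⟨hne, hc⟩
        refine ⟨hne.symm, ?_⟩
        rcases hc with h | h | ⟨h1, h2, h3⟩
        · exact Or.inr (Or.inl h)
        · exact Or.inl h
        · refine Or.inr (Or.inr ⟨h2, h1, ?_⟩)
          have := hSneg _ h3
          rwa [neg_sub] at this
      loopless := ⟨fun a h => h.1 rfl⟩ } with hG
  classical
  letI dI : DecidableRel G.Adj := Classical.decRel _
  refine ⟨G, dI, ?_⟩
  intro i
  have hiL : (i : ℕ) < n := by have := i.isLt; simp at this; omega
  -- the list values
  have hget : ([n - 1, n - 1] ++ List.replicate (n - 4) x ++ [2, 2]).get i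
      = if (i : ℕ) < 2 then n - 1 else if (i : ℕ) < m + 2 then x else 2 := by
    rw [List.get_eq_getElem]
    have hv : (i : ℕ) < n := hiL
    simp only [List.getElem_append, List.length_append, List.length_cons, List.length_nil,
      List.length_replicate, List.getElem_replicate]
    have hpair : ∀ (a w : ℕ), w < 2 → ∀ (hw : w < ([a, a] : List ℕ).length), [a, a][w] = a := by
      intro a w hw2 hw
      interval_cases w <;> rfl
    split_ifs <;> first | rfl | omega | exact hpair _ _ (by omega) _
  have hdegf : G.degree i = (Finset.univ.filter (G.Adj i)).card := by
    rw [← SimpleGraph.neighborFinset_eq_filter]; rfl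
  rw [hget, hdegf]
  have hcard2 : (Finset.univ.filter (fun b : Fin ([n - 1, n - 1] ++ List.replicate (n - 4) x ++ [2, 2]).length => (b : ℕ) < 2)).card = 2 := by
    have h0 : (0 : ℕ) < ([n - 1, n - 1] ++ List.replicate (n - 4) x ++ [2, 2]).length := by simp
    have h1 : (1 : ℕ) < ([n - 1, n - 1] ++ List.replicate (n - 4) x ++ [2, 2]).length := by simp
    have : Finset.univ.filter (fun b : Fin ([n - 1, n - 1] ++ List.replicate (n - 4) x ++ [2, 2]).length => (b : ℕ) < 2)
        = {(⟨0, h0⟩ : Fin ([n - 1, n - 1] ++ List.replicate (n - 4) x ++ [2, 2]).length), ⟨1, h1⟩} := by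
      ext b
      simp only [Finset.mem_filter, Finset.mem_univ, true_and, Finset.mem_insert,
        Finset.mem_singleton, Fin.ext_iff]
      omega
    rw [this, Finset.card_pair (by simp [Fin.ext_iff])]
  rcases lt_or_ge (i : ℕ) 2 with hi2 | hi2
  · -- hub
    rw [if_pos hi2]
    have : Finset.univ.filter (G.Adj i) = Finset.univ.filter (fun b => i ≠ b) := by
      apply Finset.filter_congr
      intro b _
      simp only [hG]
      exact ⟨fun h => h.1, fun h => ⟨h, Or.inl hi2⟩⟩
    rw [this, Finset.filter_ne, Finset.card_erase_of_mem (Finset.mem_univ _),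
      Finset.card_univ]
    simp
    omega
  rcases lt_or_ge (i : ℕ) (m + 2) with him | him
  · -- middle
    rw [if_neg (by omega), if_pos him]
    have hsplit : Finset.univ.filter (G.Adj i)
        = Finset.univ.filter (fun b : Fin ([n - 1, n - 1] ++ List.replicate (n - 4) x ++ [2, 2]).length => (b : ℕ) < 2)
          ∪ Finset.univ.filter (fun b : Fin ([n - 1, n - 1] ++ List.replicate (n - 4) x ++ [2, 2]).length =>
              2 ≤ (b : ℕ) ∧ (b : ℕ) < m + 2 ∧ e (b : ℕ) - e (i : ℕ) ∈ S) := by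
      ext b
      simp only [Finset.mem_union, Finset.mem_filter, Finset.mem_univ, true_and, hG]
      constructor
      · rintro ⟨hne, hc⟩
        rcases hc with h | h | ⟨h1, h2, h3⟩
        · omega
        · exact Or.inl h
        · rcases lt_or_ge (b : ℕ) 2 with hb | hb
          · exact Or.inl hb
          · exact Or.inr ⟨hb, h2, h3⟩
      · rintro (hb | ⟨hb2, hbm, hbS⟩)
        · exact ⟨by intro h; rw [h] at hi2; omega, Or.inr (Or.inl hb)⟩
        · refine ⟨?_, Or.inr (Or.inr ⟨him, hbm, hbS⟩)⟩
          intro hbi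
          rw [← hbi] at hbS
          simp at hbS
          exact hS0 hbS
    rw [hsplit, Finset.card_union_of_disjoint, hcard2]
    · have : (Finset.univ.filter (fun b : Fin ([n - 1, n - 1] ++ List.replicate (n - 4) x ++ [2, 2]).length =>
          2 ≤ (b : ℕ) ∧ (b : ℕ) < m + 2 ∧ e (b : ℕ) - e (i : ℕ) ∈ S)).card = S.card := by
        refine Finset.card_bij (fun b _ => e (b : ℕ) - e (i : ℕ)) ?_ ?_ ?_
        · intro b hb
          simp only [Finset.mem_filter] at hb
          exact hb.2.2.2
        · intro b1 hb1 b2 hb2 heq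
          simp only [Finset.mem_filter, Finset.mem_univ, true_and] at hb1 hb2
          have he12 : e (b1 : ℕ) = e (b2 : ℕ) := sub_left_injective (G := ZMod m) heq
          have h' := congrArg ZMod.val he12
          simp only [he] at h'
          rw [ZMod.val_cast_of_lt (by omega), ZMod.val_cast_of_lt (by omega)] at h'
          exact Fin.ext (by omega)
        · intro s hs
          set v : ℕ := (e (i : ℕ) + s).val with hv
          have hvm : v < m := ZMod.val_lt _
          refine ⟨⟨v + 2, by simp; omega⟩, ?_, ?_⟩
          · simp only [Finset.mem_filter, Finset.mem_univ, true_and]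
            refine ⟨by omega, by omega, ?_⟩
            have : e (v + 2) = e (i : ℕ) + s := by
              simp only [he, Nat.add_sub_cancel, hv]
              exact ZMod.natCast_rightInverse _
            rw [this, add_sub_cancel_left]
            exact hs
          · show e (v + 2) - e (i : ℕ) = s
            have : e (v + 2) = e (i : ℕ) + s := by
              simp only [he, Nat.add_sub_cancel, hv]
              exact ZMod.natCast_rightInverse _
            rw [this, add_sub_cancel_left]
      rw [this, hScard]; omega
    · rw [Finset.disjoint_left]
      intro b hb1 hb2
      simp only [Finset.mem_filter] at hb1 hb2
      omega
  · -- tail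
    rw [if_neg (by omega), if_neg (by omega)]
    have : Finset.univ.filter (G.Adj i)
        = Finset.univ.filter (fun b : Fin ([n - 1, n - 1] ++ List.replicate (n - 4) x ++ [2, 2]).length => (b : ℕ) < 2) := by
      apply Finset.filter_congr
      intro b _
      simp only [hG]
      constructor
      · rintro ⟨hne, hc⟩
        rcases hc with h | h | ⟨h1, h2, h3⟩
        · omega
        · exact h
        · omega
      · intro hb
        exact ⟨by intro h; rw [← h] at hb; omega, Or.inr (Or.inl hb)⟩
    rw [this, hcard2]
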